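/- arXiv:1203.4748 — 2 statements merged into one kernel-verified Lean document; each statement's English description precedes it below -/
import Mathlib

section
/- Let G be a topological group and n ≥ 0 an integer. Suppose that for every commuting n-tuple (x₁,…,xₙ) ∈ Hom(ℤⁿ, G) the centralizer Z_G(x₁,…,xₙ) is path-connected. Then Hom(ℤⁿ⁺¹, G) is path-connected. -/
/-- The space `Hom(ℤⁿ, G)` of commuting `n`-tuples in `G`, viewed as a subset of `Gⁿ`
(with the subspace topology coming from the product topology on `Fin n → G`). -/
def commutingTuples (G : Type*) [Group G] (n : ℕ) : Set (Fin n → G) :=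
  {x | ∀ i j, Commute (x i) (x j)}

/-- The centralizer `Z_G(x₁, …, xₙ) = {g ∈ G : g xᵢ = xᵢ g for all i}` of a tuple of
elements of `G`, as a subset of `G` (with the subspace topology). -/
def tupleCentralizer {G : Type*} [Group G] {n : ℕ} (x : Fin n → G) : Set G :=
  {g | ∀ i, g * x i = x i * g}

lemma one_mem_commutingTuples (G : Type*) [Group G] (n : ℕ) :
    (1 : Fin n → G) ∈ commutingTuples G n := fun _ _ => Commute.one_left _

/-- Let `G` be a topological group and `n ≥ 0`.  If for every commuting `n`-tuple
`(x₁, …, xₙ) ∈ Hom(ℤⁿ, G)` the centralizer `Z_G(x₁, …, xₙ)` is path-connected, then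
`Hom(ℤⁿ⁺¹, G)` is path-connected.  (The converse direction of Example 2.3.) -/
theorem commutingTuples_pathConnected_of_centralizers_pathConnected
    {G : Type*} [Group G] [TopologicalSpace G] [IsTopologicalGroup G] (n : ℕ)
    (h : ∀ x ∈ commutingTuples G n, IsPathConnected (tupleCentralizer x)) :
    IsPathConnected (commutingTuples G (n + 1)) := by
  -- Main claim: any commuting tuple whose coordinates from index k on are 1
  -- is joined to the constant 1 tuple.
  have main : ∀ k : ℕ, k ≤ n + 1 → ∀ x ∈ commutingTuples G (n + 1),
      (∀ i : Fin (n + 1), k ≤ (i : ℕ) → x i = 1) →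
      JoinedIn (commutingTuples G (n + 1)) x 1 := by
    intro k
    induction k with
    | zero =>
      intro _ x hx hx1
      have : x = 1 := funext fun i => hx1 i (Nat.zero_le _)
      rw [this]
      exact JoinedIn.refl (one_mem_commutingTuples G (n + 1))
    | succ k ih =>
      intro hk1 x hx hx1
      have hkn : k < n + 1 := hk1
      set kk : Fin (n + 1) := ⟨k, hkn⟩ with hkk
      -- the n-tuple obtained from x by keeping indices < k and padding with 1
      set y : Fin n → G := fun i => if hi : (i : ℕ) < k then x ⟨i, hi.trans hkn⟩ else 1
        with hy
      have hymem : y ∈ commutingTuples G n := by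
        intro i j
        by_cases hi : (i : ℕ) < k <;> by_cases hj : (j : ℕ) < k <;>
          simp only [hy, hi, hj, dif_pos, dif_neg, not_false_iff] <;>
          first
            | exact hx _ _
            | exact Commute.one_left _
            | exact Commute.one_right _
      -- a key commutation fact
      have keycomm : ∀ g : G, g ∈ tupleCentralizer y →
          ∀ i : Fin (n + 1), i ≠ kk → Commute g (x i) := by
        intro g hg i hi
        by_cases hik : (i : ℕ) < k
        · have := hg ⟨i, hik.trans_le (Nat.lt_succ_iff.mp hkn)⟩
          exact (by simpa [hy, hik, Fin.eta] using this : g * x i = x i * g)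
        · have hik' : (i : ℕ) ≠ k := fun hc => hi (Fin.ext hc)
          have hii : k + 1 ≤ (i : ℕ) := by omega
          rw [hx1 i hii]
          exact Commute.one_right _
      have hxkk : x kk ∈ tupleCentralizer y := by
        intro i
        by_cases hik : (i : ℕ) < k <;>
          simp only [hy, hik, dif_pos, dif_neg, not_false_iff]
        · exact hx _ _
        · simp
      have h1y : (1 : G) ∈ tupleCentralizer y := by intro i; simp
      obtain ⟨p, hp⟩ := (h y hymem).joinedIn _ hxkk _ h1y
      -- path from x to Function.update x kk 1
      classical
      set x' : Fin (n + 1) → G := Function.update x kk 1 with hx'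
      have hmemt : ∀ t : unitInterval, Function.update x kk (p t) ∈
          commutingTuples G (n + 1) := by
        intro t i j
        rcases eq_or_ne i kk with hi | hi <;> rcases eq_or_ne j kk with hj | hj
        · subst hi; subst hj; simp
        · subst hi
          simp only [Function.update_self, Function.update_of_ne hj]
          exact keycomm _ (hp t) j hj
        · subst hj
          simp only [Function.update_self, Function.update_of_ne hi]
          exact (keycomm _ (hp t) i hi).symm
        · simp only [Function.update_of_ne hi, Function.update_of_ne hj]
          exact hx i j
      have P : JoinedIn (commutingTuples G (n + 1)) x x' := by
        refine ⟨⟨⟨fun t => Function.update x kk (p t), ?_⟩, ?_, ?_⟩, hmemt⟩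
        · exact continuous_const.update kk p.continuous
        · simp [Function.update_eq_self]
        · simp [hx']
      have hx'mem : x' ∈ commutingTuples G (n + 1) := by
        have := hmemt 1
        simpa [hx', p.target] using this
      have hx'1 : ∀ i : Fin (n + 1), k ≤ (i : ℕ) → x' i = 1 := by
        intro i hi
        rcases eq_or_ne i kk with h' | h'
        · subst h'; simp [hx']
        · rw [hx', Function.update_of_ne h']
          apply hx1
          have : (i : ℕ) ≠ k := fun hc => h' (Fin.ext hc)
          omega
      exact P.trans (ih (le_of_lt hk1) x' hx'mem hx'1)
  refine ⟨1, one_mem_commutingTuples G (n + 1), ?_⟩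
  intro x hx
  exact (main (n + 1) le_rfl x hx (fun i hi => absurd hi (not_le.2 i.isLt))).symm
end

section
/- Let W be a finite group and 𝒲 a set of subgroups of W. For each H ∈ 𝒲, let T_H ⊆ W be a left-coset transversal for H, i.e., every left coset wH contains exactly one element of T_H. Assume: (a) whenever H, H′ ∈ 𝒲 and H ⊆ H′, then T_{H′} ⊆ T_H; (b) for all H, H′ ∈ 𝒲 there exists H″ ∈ 𝒲 with H ∪ H′ ⊆ H″ and T_{H″} = T_H ∩ T_{H′}; (c) the union of the T_H over H ∈ 𝒲 is all of W. For H ∈ 𝒲, set C_H = T_H ∖ ⋃ {T_{H′} : H′ ∈ 𝒲, H ⊊ H′}. Then the sets C_H, H ∈ 𝒲, are pairwise disjoint and their union is W; moreover, for every H ∈ 𝒲, T_H = ⋃ {C_{H′} : H′ ∈ 𝒲, H ⊆ H′}. -/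
/-- Given a family `𝒲` of subgroups of `W` and a choice `T H` of a left-coset transversal
for each subgroup `H`, the cell `C H` is the set of elements of `T H` that do not lie in
`T H'` for any strictly larger member `H'` of the family. -/
def transversalCell {W : Type*} [Group W] (𝒲 : Set (Subgroup W)) (T : Subgroup W → Set W)
    (H : Subgroup W) : Set W :=
  T H \ ⋃ H' ∈ 𝒲, ⋃ (_ : H < H'), T H'

/-- Let `W` be a finite group and `𝒲` a set of subgroups of `W`; for each `H ∈ 𝒲` let
`T H` be a left-coset transversal for `H` (every left coset `wH` contains exactly one
element of `T H`).  Assume (a) if `H ⊆ H'` (both in `𝒲`) then `T H' ⊆ T H`; (b) for all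
`H, H' ∈ 𝒲` there is `H'' ∈ 𝒲` containing `H ∪ H'` with `T H'' = T H ∩ T H'` (the coset
intersection property); (c) the union of the `T H`, `H ∈ 𝒲`, is all of `W`.  Then the
cells `C H = T H \ ⋃ {T H' : H ⊊ H'}`, `H ∈ 𝒲`, are pairwise disjoint, their union is `W`,
and for every `H ∈ 𝒲`, `T H = ⋃ {C H' : H' ∈ 𝒲, H ⊆ H'}`.  (Section 3.) -/
theorem transversalCell_partition
    {W : Type*} [Group W] [Finite W] (𝒲 : Set (Subgroup W)) (T : Subgroup W → Set W)
    (htrans : ∀ H ∈ 𝒲, ∀ w : W, ∃! t : W, t ∈ T H ∧ w⁻¹ * t ∈ H)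
    (ha : ∀ H ∈ 𝒲, ∀ H' ∈ 𝒲, H ≤ H' → T H' ⊆ T H)
    (hb : ∀ H ∈ 𝒲, ∀ H' ∈ 𝒲, ∃ H'' ∈ 𝒲, H ≤ H'' ∧ H' ≤ H'' ∧ T H'' = T H ∩ T H')
    (hc : (⋃ H ∈ 𝒲, T H) = Set.univ) :
    (∀ H ∈ 𝒲, ∀ H' ∈ 𝒲, H ≠ H' →
        Disjoint (transversalCell 𝒲 T H) (transversalCell 𝒲 T H')) ∧
      (⋃ H ∈ 𝒲, transversalCell 𝒲 T H) = Set.univ ∧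
      (∀ H ∈ 𝒲, T H = ⋃ H' ∈ 𝒲, ⋃ (_ : H ≤ H'), transversalCell 𝒲 T H') := by
  -- For each w, the set of H ∈ 𝒲 with w ∈ T H has a maximum element M.
  have key : ∀ w : W, ∃ M ∈ 𝒲, w ∈ T M ∧ ∀ H ∈ 𝒲, w ∈ T H → H ≤ M := by
    intro w
    have hne : {H : Subgroup W | H ∈ 𝒲 ∧ w ∈ T H}.Nonempty := by
      have : w ∈ ⋃ H ∈ 𝒲, T H := by rw [hc]; trivial
      simp only [Set.mem_iUnion] at this
      obtain ⟨H, hH, hw⟩ := this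
      exact ⟨H, hH, hw⟩
    obtain ⟨M, hM, hmax⟩ : ∃ M ∈ {H : Subgroup W | H ∈ 𝒲 ∧ w ∈ T H},
        ∀ a ∈ {H : Subgroup W | H ∈ 𝒲 ∧ w ∈ T H}, id M ≤ id a → id M = id a := by
      obtain ⟨M, hM, hmax⟩ := (Set.toFinite _).exists_maximal hne
      exact ⟨M, hM, fun a ha h => le_antisymm h (hmax ha h)⟩
    refine ⟨M, hM.1, hM.2, fun H hH hw => ?_⟩
    obtain ⟨H'', hH'', hle1, hle2, hT⟩ := hb H hH M hM.1
    have hw'' : w ∈ T H'' := by rw [hT]; exact ⟨hw, hM.2⟩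
    have := hmax H'' ⟨hH'', hw''⟩ hle2
    simp only [id] at this
    subst this
    exact hle1
  -- w ∈ C M where M is maximum.
  have cellmem : ∀ w : W, ∀ M ∈ 𝒲, w ∈ T M → (∀ H ∈ 𝒲, w ∈ T H → H ≤ M) →
      w ∈ transversalCell 𝒲 T M := by
    intro w M hM hw hmax
    refine ⟨hw, ?_⟩
    simp only [Set.mem_iUnion, not_exists]
    rintro H' hH' hlt hw'
    exact hlt.2 (hmax H' hH' hw')
  refine ⟨?_, ?_, ?_⟩
  · intro H hH H' hH' hne
    rw [Set.disjoint_left]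
    rintro w ⟨hw1, hn1⟩ ⟨hw2, hn2⟩
    obtain ⟨H'', hH'', hle1, hle2, hT⟩ := hb H hH H' hH'
    have hw'' : w ∈ T H'' := by rw [hT]; exact ⟨hw1, hw2⟩
    simp only [Set.mem_iUnion, not_exists] at hn1 hn2
    have e1 : H = H'' := by
      by_contra h
      exact hn1 H'' hH'' (lt_of_le_of_ne hle1 h) hw''
    have e2 : H' = H'' := by
      by_contra h
      exact hn2 H'' hH'' (lt_of_le_of_ne hle2 h) hw''
    exact hne (e1.trans e2.symm)
  · ext w
    simp only [Set.mem_iUnion, Set.mem_univ, iff_true]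
    obtain ⟨M, hM, hw, hmax⟩ := key w
    exact ⟨M, hM, cellmem w M hM hw hmax⟩
  · intro H hH
    ext w
    simp only [Set.mem_iUnion]
    constructor
    · intro hw
      obtain ⟨M, hM, hwM, hmax⟩ := key w
      exact ⟨M, hM, hmax H hH hw, cellmem w M hM hwM hmax⟩
    · rintro ⟨H', hH', hle, hw, -⟩
      exact ha H hH H' hH' hle hw
end
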